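/- Let Λ, Λ̃ : [0,1] → ℝ both satisfy the functional equation Λ(β(α)) − Λ(α) = r(α) for all α ∈ [0,1], where β : [0,1] → [0,1] is continuous strictly increasing with finitely many fixed points including 0 and 1, and r : [0,1] → ℝ. If Λ and Λ̃ are both continuous and Λ(0) = Λ̃(0), then Λ = Λ̃ on [0,1]. -/

import Mathlib

open Set Filter Topology

/-- Iterates of β starting at α converge (monotonically) to a fixed point L
with the same D-value as α. -/
lemma aux_iter_lim (β D : ℝ → ℝ)
    (hmaps : Set.MapsTo β (Set.Icc 0 1) (Set.Icc 0 1))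
    (hcont : ContinuousOn β (Set.Icc 0 1))
    (hmono : StrictMonoOn β (Set.Icc 0 1))
    (hDcont : ContinuousOn D (Set.Icc 0 1))
    (hD : ∀ α ∈ Set.Icc (0:ℝ) 1, D (β α) = D α)
    (α : ℝ) (hα : α ∈ Set.Icc (0:ℝ) 1) :
    ∃ L ∈ Set.Icc (0:ℝ) 1, β L = L ∧ D L = D α ∧
      (∀ q ∈ Set.Icc (0:ℝ) 1, β q = q → ((α ≤ q → L ≤ q) ∧ (q ≤ α → q ≤ L))) ∧
      (β α ≤ α → L ≤ α) ∧ (α ≤ β α → α ≤ L) := by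
  set a : ℕ → ℝ := fun n => β^[n] α with ha
  have han : ∀ n, a n ∈ Set.Icc (0:ℝ) 1 := by
    intro n
    induction n with
    | zero => exact hα
    | succ n ih =>
        have : a (n+1) = β (a n) := Function.iterate_succ_apply' β n α
        rw [this]; exact hmaps ih
  have hstep : ∀ n, a (n+1) = β (a n) := fun n => Function.iterate_succ_apply' β n α
  have hDa : ∀ n, D (a n) = D α := by
    intro n
    induction n with
    | zero => rfl
    | succ n ih => rw [hstep n, hD _ (han n)]; exact ih
  rcases le_total α (β α) with h | h
  · -- increasing case
    have hmono_a : Monotone a := by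
      apply monotone_nat_of_le_succ
      intro n
      induction n with
      | zero => rw [hstep 0]; exact h
      | succ n ih =>
          calc a (n+1) = β (a n) := hstep n
            _ ≤ β (a (n+1)) := hmono.monotoneOn (han n) (han (n+1)) ih
            _ = a (n+2) := (hstep (n+1)).symm
    have hbdd : BddAbove (Set.range a) := by
      refine ⟨1, ?_⟩; rintro x ⟨n, rfl⟩; exact (han n).2
    set L := ⨆ n, a n with hL
    have hta : Tendsto a atTop (𝓝 L) := tendsto_atTop_ciSup hmono_a hbdd
    have hLmem : L ∈ Set.Icc (0:ℝ) 1 := isClosed_Icc.mem_of_tendsto hta (Filter.Eventually.of_forall han)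
    have hta' : Tendsto a atTop (𝓝[Set.Icc (0:ℝ) 1] L) :=
      tendsto_nhdsWithin_of_tendsto_nhds_of_eventually_within a hta (Filter.Eventually.of_forall han)
    have hβL : β L = L := by
      have h1 : Tendsto (fun n => β (a n)) atTop (𝓝 (β L)) :=
        ((hcont L hLmem).tendsto).comp hta'
      have h2 : Tendsto (fun n => a (n+1)) atTop (𝓝 L) := hta.comp (tendsto_add_atTop_nat 1)
      have h3 : (fun n => a (n+1)) = fun n => β (a n) := funext hstep
      rw [h3] at h2
      exact tendsto_nhds_unique h1 h2
    have hDL : D L = D α := by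
      have h1 : Tendsto (fun n => D (a n)) atTop (𝓝 (D L)) :=
        ((hDcont L hLmem).tendsto).comp hta'
      have h2 : Tendsto (fun n => D (a n)) atTop (𝓝 (D α)) :=
        tendsto_const_nhds.congr (fun n => (hDa n).symm)
      exact tendsto_nhds_unique h1 h2
    refine ⟨L, hLmem, hβL, hDL, ?_, ?_, ?_⟩
    · intro q hq hqfix
      constructor
      · intro hαq
        have haq : ∀ n, a n ≤ q := by
          intro n
          induction n with
          | zero => exact hαq
          | succ n ih =>
              rw [hstep n, ← hqfix]
              exact hmono.monotoneOn (han n) hq ih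
        exact le_of_tendsto hta (Filter.Eventually.of_forall haq)
      · intro hqα
        have : α ≤ L := ge_of_tendsto hta (Filter.Eventually.of_forall fun n => hmono_a (Nat.zero_le n))
        linarith
    · intro hle
      have : α = β α := le_antisymm h hle
      have hfix' : β α = α := this.symm
      have haα : ∀ n, a n = α := by
        intro n
        induction n with
        | zero => rfl
        | succ n ih => rw [hstep n, ih, hfix']
      have haeq : a = fun _ => α := funext haα
      have : Tendsto a atTop (𝓝 α) := by rw [haeq]; exact tendsto_const_nhds
      have := tendsto_nhds_unique hta this
      exact this.le
    · intro _
      exact ge_of_tendsto hta (Filter.Eventually.of_forall fun n => hmono_a (Nat.zero_le n))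
  · -- decreasing case
    have hanti_a : Antitone a := by
      apply antitone_nat_of_succ_le
      intro n
      induction n with
      | zero => rw [hstep 0]; exact h
      | succ n ih =>
          calc a (n+2) = β (a (n+1)) := hstep (n+1)
            _ ≤ β (a n) := hmono.monotoneOn (han (n+1)) (han n) ih
            _ = a (n+1) := (hstep n).symm
    have hbdd : BddBelow (Set.range a) := by
      refine ⟨0, ?_⟩; rintro x ⟨n, rfl⟩; exact (han n).1
    set L := ⨅ n, a n with hL
    have hta : Tendsto a atTop (𝓝 L) := tendsto_atTop_ciInf hanti_a hbdd
    have hLmem : L ∈ Set.Icc (0:ℝ) 1 := isClosed_Icc.mem_of_tendsto hta (Filter.Eventually.of_forall han)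
    have hta' : Tendsto a atTop (𝓝[Set.Icc (0:ℝ) 1] L) :=
      tendsto_nhdsWithin_of_tendsto_nhds_of_eventually_within a hta (Filter.Eventually.of_forall han)
    have hβL : β L = L := by
      have h1 : Tendsto (fun n => β (a n)) atTop (𝓝 (β L)) :=
        ((hcont L hLmem).tendsto).comp hta'
      have h2 : Tendsto (fun n => a (n+1)) atTop (𝓝 L) := hta.comp (tendsto_add_atTop_nat 1)
      have h3 : (fun n => a (n+1)) = fun n => β (a n) := funext hstep
      rw [h3] at h2
      exact tendsto_nhds_unique h1 h2
    have hDL : D L = D α := by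
      have h1 : Tendsto (fun n => D (a n)) atTop (𝓝 (D L)) :=
        ((hDcont L hLmem).tendsto).comp hta'
      have h2 : Tendsto (fun n => D (a n)) atTop (𝓝 (D α)) :=
        tendsto_const_nhds.congr (fun n => (hDa n).symm)
      exact tendsto_nhds_unique h1 h2
    refine ⟨L, hLmem, hβL, hDL, ?_, ?_, ?_⟩
    · intro q hq hqfix
      constructor
      · intro hαq
        have : L ≤ α := le_of_tendsto hta (Filter.Eventually.of_forall fun n => hanti_a (Nat.zero_le n))
        linarith
      · intro hqα
        have haq : ∀ n, q ≤ a n := by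
          intro n
          induction n with
          | zero => exact hqα
          | succ n ih =>
              rw [hstep n, ← hqfix]
              exact hmono.monotoneOn hq (han n) ih
        exact ge_of_tendsto hta (Filter.Eventually.of_forall haq)
    · intro _
      exact le_of_tendsto hta (Filter.Eventually.of_forall fun n => hanti_a (Nat.zero_le n))
    · intro hle
      have hfix' : β α = α := le_antisymm h hle
      have haα : ∀ n, a n = α := by
        intro n
        induction n with
        | zero => rfl
        | succ n ih => rw [hstep n, ih, hfix']
      have haeq : a = fun _ => α := funext haα
      have : Tendsto a atTop (𝓝 α) := by rw [haeq]; exact tendsto_const_nhds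
      have := tendsto_nhds_unique hta this
      exact this.ge

/-- D vanishes at every fixed point of β, given the invariance and D 0 = 0. -/
lemma aux_fix_zero (β D : ℝ → ℝ)
    (hmaps : Set.MapsTo β (Set.Icc 0 1) (Set.Icc 0 1))
    (hcont : ContinuousOn β (Set.Icc 0 1))
    (hmono : StrictMonoOn β (Set.Icc 0 1))
    (hβ0 : β 0 = 0)
    (hfix : {α ∈ Set.Icc (0:ℝ) 1 | β α = α}.Finite)
    (hDcont : ContinuousOn D (Set.Icc 0 1))
    (hD : ∀ α ∈ Set.Icc (0:ℝ) 1, D (β α) = D α)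
    (hD0 : D 0 = 0) :
    ∀ p ∈ Set.Icc (0:ℝ) 1, β p = p → D p = 0 := by
  by_contra hcon
  push_neg at hcon
  obtain ⟨pp, hppIcc, hppfix, hppD⟩ := hcon
  set T : Set ℝ := {p ∈ Set.Icc (0:ℝ) 1 | β p = p ∧ D p ≠ 0} with hT
  have hTfin : T.Finite := hfix.subset (fun x hx => ⟨hx.1, hx.2.1⟩)
  have hTne : T.Nonempty := ⟨pp, hppIcc, hppfix, hppD⟩
  obtain ⟨p, hpT, hpmin⟩ := Set.exists_min_image T id hTfin hTne
  obtain ⟨hpIcc, hpfix, hpD⟩ := hpT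
  have hp0 : 0 < p := by
    rcases lt_or_eq_of_le hpIcc.1 with h | h
    · exact h
    · exact absurd (h ▸ hD0) hpD
  -- previous fixed point
  set F' : Set ℝ := {x ∈ Set.Icc (0:ℝ) 1 | β x = x ∧ x < p} with hF'
  have hF'fin : F'.Finite := hfix.subset (fun x hx => ⟨hx.1, hx.2.1⟩)
  have hF'ne : F'.Nonempty := ⟨0, ⟨le_refl 0, zero_le_one⟩, hβ0, hp0⟩
  obtain ⟨p', hp'F', hp'max⟩ := Set.exists_max_image F' id hF'fin hF'ne
  obtain ⟨hp'Icc, hp'fix, hp'lt⟩ := hp'F'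
  have hp'D : D p' = 0 := by
    by_contra hne
    have : p ≤ p' := hpmin p' ⟨hp'Icc, hp'fix, hne⟩
    linarith
  -- no fixed points strictly between p' and p
  have hno : ∀ x ∈ Set.Ioo p' p, β x ≠ x := by
    intro x hx hxfix
    have hxIcc : x ∈ Set.Icc (0:ℝ) 1 := ⟨le_trans hp'Icc.1 hx.1.le, le_trans hx.2.le hpIcc.2⟩
    have : x ∈ F' := ⟨hxIcc, hxfix, hx.2⟩
    have := hp'max x this
    simp only [id] at this
    exact absurd this (not_le.mpr hx.1)
  -- D takes only two values on [p', p]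
  have hsub : Set.Icc p' p ⊆ Set.Icc (0:ℝ) 1 :=
    Set.Icc_subset_Icc hp'Icc.1 hpIcc.2
  have htwo : ∀ x ∈ Set.Icc p' p, D x = D p' ∨ D x = D p := by
    intro x hx
    rcases eq_or_lt_of_le hx.1 with h | h
    · left; rw [← h]
    rcases eq_or_lt_of_le hx.2 with h' | h'
    · right; rw [h']
    have hxIcc : x ∈ Set.Icc (0:ℝ) 1 := hsub hx
    obtain ⟨L, hLIcc, hLfix, hLD, hLbd, hLle, hLge⟩ :=
      aux_iter_lim β D hmaps hcont hmono hDcont hD x hxIcc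
    have hxne : β x ≠ x := hno x ⟨h, h'⟩
    have hLne : L ≠ x := by
      intro he; rw [he] at hLfix; exact hxne hLfix
    rcases lt_or_gt_of_ne hxne with hlt | hgt
    · -- β x < x : L = p'
      have h1 : L ≤ x := hLle hlt.le
      have h2 : p' ≤ L := ((hLbd p' hp'Icc hp'fix).2 h.le)
      have h3 : L < x := lt_of_le_of_ne h1 hLne
      have : L = p' := by
        by_contra hne2
        have : L ∈ Set.Ioo p' p := ⟨lt_of_le_of_ne h2 (Ne.symm hne2), lt_trans h3 h'⟩
        exact hno L this hLfix
      left; rw [← hLD, this]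
    · -- β x > x : L = p
      have h1 : x ≤ L := hLge hgt.le
      have h2 : L ≤ p := ((hLbd p hpIcc hpfix).1 h'.le)
      have h3 : x < L := lt_of_le_of_ne h1 (Ne.symm hLne)
      have : L = p := by
        by_contra hne2
        have : L ∈ Set.Ioo p' p := ⟨lt_trans h h3, lt_of_le_of_ne h2 hne2⟩
        exact hno L this hLfix
      right; rw [← hLD, this]
  -- IVT contradiction
  have hne : D p' ≠ D p := by rw [hp'D]; exact fun he => hpD he.symm
  have hcmem : (D p' + D p) / 2 ∈ Set.uIcc (D p') (D p) := by
    rw [Set.mem_uIcc]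
    rcases le_total (D p') (D p) with h | h
    · left; constructor <;> linarith
    · right; constructor <;> linarith
  have hIVT : Set.uIcc (D p') (D p) ⊆ D '' Set.uIcc p' p :=
    intermediate_value_uIcc (hDcont.mono (by rw [Set.uIcc_of_le hp'lt.le]; exact hsub))
  obtain ⟨x, hxmem, hxeq⟩ := hIVT hcmem
  rw [Set.uIcc_of_le hp'lt.le] at hxmem
  rcases htwo x hxmem with h | h
  · rw [hxeq] at h; exact hne (by linarith)
  · rw [hxeq] at h; exact hne (by linarith)

theorem stmt_11 (β r Λ Λ' : ℝ → ℝ)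
    (hmaps : Set.MapsTo β (Set.Icc 0 1) (Set.Icc 0 1))
    (hcont : ContinuousOn β (Set.Icc 0 1))
    (hmono : StrictMonoOn β (Set.Icc 0 1))
    (hβ0 : β 0 = 0) (hβ1 : β 1 = 1)
    (hfix : {α ∈ Set.Icc (0:ℝ) 1 | β α = α}.Finite)
    (hΛcont : ContinuousOn Λ (Set.Icc 0 1))
    (hΛ'cont : ContinuousOn Λ' (Set.Icc 0 1))
    (hΛeq : ∀ α ∈ Set.Icc (0:ℝ) 1, Λ (β α) - Λ α = r α)
    (hΛ'eq : ∀ α ∈ Set.Icc (0:ℝ) 1, Λ' (β α) - Λ' α = r α)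
    (h0 : Λ 0 = Λ' 0) :
    ∀ α ∈ Set.Icc (0:ℝ) 1, Λ α = Λ' α := by
  set D : ℝ → ℝ := fun x => Λ x - Λ' x with hDdef
  have hDcont : ContinuousOn D (Set.Icc 0 1) := hΛcont.sub hΛ'cont
  have hD : ∀ α ∈ Set.Icc (0:ℝ) 1, D (β α) = D α := by
    intro α hα
    have h1 := hΛeq α hα
    have h2 := hΛ'eq α hα
    simp only [hDdef]
    linarith
  have hD0 : D 0 = 0 := by simp [hDdef, h0]
  have hfixD : ∀ p ∈ Set.Icc (0:ℝ) 1, β p = p → D p = 0 :=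
    aux_fix_zero β D hmaps hcont hmono hβ0 hfix hDcont hD hD0
  -- conclude
  intro α hα
  obtain ⟨L, hLIcc, hLfix, hLD, _, _, _⟩ :=
    aux_iter_lim β D hmaps hcont hmono hDcont hD α hα
  have : D α = 0 := by rw [← hLD]; exact hfixD L hLIcc hLfix
  simpa [hDdef, sub_eq_zero] using this
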